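/- Let ω, a ∈ ℝ³ with θ = ‖ω‖ ≠ 0, g ∈ ℝ, a_g = (0,0,g), and Ω = [ω]^∧. Let A_M and A_N be the 3×2 matrices with columns (a_g, 0) and (a, 0) respectively, B = [[0,1],[0,0]], M = [[0₃ₓ₃, A_M],[0₂ₓ₃, −B]], N = [[Ω, A_N],[0₂ₓ₃, B]]. Let R₀ be a 3×3 real matrix, P₀ the 3×2 matrix with columns (v₀, p₀) for v₀, p₀ ∈ ℝ³, and X₀ = [[R₀, P₀],[0₂ₓ₃, I₂]]. Then for every t ∈ ℝ, exp(tM) · X₀ · exp(tN) = [[R₀·exp(tΩ), R₀·P_N(t) + (P₀ + P_M(t))·(I₂ + tB)],[0₂ₓ₃, I₂]], where P_M(t) is the 3×2 matrix with columns (t·a_g, −(t²/2)·a_g) and P_N(t) is the 3×2 matrix whose first column is ( t·I₃ + ((1 − cos(θt))/θ²)·Ω + ((θt − sin(θt))/θ³)·Ω² )·a and whose second column is ( (t²/2)·I₃ + ((θt − sin(θt))/θ³)·Ω + ((θ²t²/2 − 1 + cos(θt))/θ⁴)·Ω² )·a. -/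

import Mathlib

open Matrix

/-- The hat map `[ω]^∧`: the skew-symmetric matrix satisfying `([ω]^∧) x = ω × x`. -/
noncomputable def hat (ω : EuclideanSpace ℝ (Fin 3)) : Matrix (Fin 3) (Fin 3) ℝ :=
  !![0, -ω 2, ω 1; ω 2, 0, -ω 0; -ω 1, ω 0, 0]

/-- The 3×2 matrix with the two given columns. -/
noncomputable def cols (u w : Fin 3 → ℝ) : Matrix (Fin 3) (Fin 2) ℝ :=
  Matrix.of fun i j => ![u i, w i] j

open scoped Nat

section ColsLemmas

lemma cols_add (u w u' w' : Fin 3 → ℝ) :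
    cols u w + cols u' w' = cols (u + u') (w + w') := by
  ext i j; fin_cases j <;> simp [cols]

lemma cols_smul (c : ℝ) (u w : Fin 3 → ℝ) : c • cols u w = cols (c • u) (c • w) := by
  ext i j; fin_cases j <;> simp [cols]

lemma cols_sub (u w u' w' : Fin 3 → ℝ) :
    cols u w - cols u' w' = cols (u - u') (w - w') := by
  ext i j; fin_cases j <;> simp [cols]

lemma mul_cols (X : Matrix (Fin 3) (Fin 3) ℝ) (u w : Fin 3 → ℝ) :
    X * cols u w = cols (X.mulVec u) (X.mulVec w) := by
  ext i j; fin_cases j <;>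
    simp [cols, Matrix.mul_apply, Matrix.mulVec, dotProduct]

lemma cols_mul_B (u w : Fin 3 → ℝ) :
    cols u w * !![(0:ℝ), 1; 0, 0] = cols 0 u := by
  ext i j; fin_cases j <;>
    simp [cols, Matrix.mul_apply, Fin.sum_univ_succ]

end ColsLemmas

section BlockSum

lemma hasSum_fromBlocks {ι : Type*} {f₁ : ι → Matrix (Fin 3) (Fin 3) ℝ}
    {f₂ : ι → Matrix (Fin 3) (Fin 2) ℝ} {f₄ : ι → Matrix (Fin 2) (Fin 2) ℝ}
    {S₁ : Matrix (Fin 3) (Fin 3) ℝ} {S₂ : Matrix (Fin 3) (Fin 2) ℝ}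
    {S₄ : Matrix (Fin 2) (Fin 2) ℝ}
    (h₁ : HasSum f₁ S₁) (h₂ : HasSum f₂ S₂) (h₄ : HasSum f₄ S₄) :
    HasSum (fun n => Matrix.fromBlocks (f₁ n) (f₂ n) 0 (f₄ n))
      (Matrix.fromBlocks S₁ S₂ 0 S₄) := by
  let φ₁ : Matrix (Fin 3) (Fin 3) ℝ →+ Matrix (Fin 3 ⊕ Fin 2) (Fin 3 ⊕ Fin 2) ℝ :=
    AddMonoidHom.mk' (fun X => Matrix.fromBlocks X 0 0 0)
      (by intro X Y; rw [Matrix.fromBlocks_add]; simp)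
  let φ₂ : Matrix (Fin 3) (Fin 2) ℝ →+ Matrix (Fin 3 ⊕ Fin 2) (Fin 3 ⊕ Fin 2) ℝ :=
    AddMonoidHom.mk' (fun X => Matrix.fromBlocks 0 X 0 0)
      (by intro X Y; rw [Matrix.fromBlocks_add]; simp)
  let φ₄ : Matrix (Fin 2) (Fin 2) ℝ →+ Matrix (Fin 3 ⊕ Fin 2) (Fin 3 ⊕ Fin 2) ℝ :=
    AddMonoidHom.mk' (fun X => Matrix.fromBlocks 0 0 0 X)
      (by intro X Y; rw [Matrix.fromBlocks_add]; simp)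
  have c₁ : Continuous φ₁ := by
    apply continuous_matrix
    rintro (i | i) (j | j) <;> simp [φ₁] <;>
      first
        | exact continuous_id.matrix_elem _ _
        | exact continuous_const
  have c₂ : Continuous φ₂ := by
    apply continuous_matrix
    rintro (i | i) (j | j) <;> simp [φ₂] <;>
      first
        | exact continuous_id.matrix_elem _ _
        | exact continuous_const
  have c₄ : Continuous φ₄ := by
    apply continuous_matrix
    rintro (i | i) (j | j) <;> simp [φ₄] <;>
      first
        | exact continuous_id.matrix_elem _ _
        | exact continuous_const
  have H := ((h₁.map φ₁ c₁).add (h₂.map φ₂ c₂)).add (h₄.map φ₄ c₄)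
  have e1 : (fun n => φ₁ (f₁ n) + φ₂ (f₂ n) + φ₄ (f₄ n))
      = fun n => Matrix.fromBlocks (f₁ n) (f₂ n) 0 (f₄ n) := by
    funext n
    simp only [φ₁, φ₂, φ₄, AddMonoidHom.mk'_apply, Matrix.fromBlocks_add]
    simp
  have e2 : φ₁ S₁ + φ₂ S₂ + φ₄ S₄ = Matrix.fromBlocks S₁ S₂ 0 S₄ := by
    simp only [φ₁, φ₂, φ₄, AddMonoidHom.mk'_apply, Matrix.fromBlocks_add]
    simp
  rw [← e1, ← e2]; exact H

end BlockSum

section Scalars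

lemma scal1 {θ t : ℝ} (hθ : θ ≠ 0) :
    HasSum (fun m : ℕ => t ^ (2*m+2) / (2*m+2)! * (-θ^2) ^ m)
      ((1 - Real.cos (θ*t)) / θ^2) := by
  have H := Real.hasSum_cos (θ*t)
  have H1 := ((hasSum_nat_add_iff' (f := fun n : ℕ => (-1:ℝ)^n * (θ*t)^(2*n) / (2*n)!) 1).mpr
      H).neg.div_const (θ^2)
  have e : (fun m : ℕ => t ^ (2*m+2) / (2*m+2)! * (-θ^2) ^ m)
      = fun n : ℕ => -((-1:ℝ)^(n+1) * (θ*t)^(2*(n+1)) / (2*(n+1))!) / θ^2 := by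
    funext m
    have h2 : 2*(m+1) = 2*m+2 := by ring
    rw [h2, mul_pow, neg_pow (θ^2) m, pow_succ (-1:ℝ) m]
    have hfac : ((2*m+2)! : ℝ) ≠ 0 := by positivity
    field_simp
    ring
  have e2 : -(Real.cos (θ*t) - ∑ i ∈ Finset.range 1, (-1:ℝ)^i * (θ*t)^(2*i) / (2*i)!) / θ^2
      = (1 - Real.cos (θ*t)) / θ^2 := by
    simp
  rw [e]
  rw [e2] at H1
  exact H1

lemma scal2 {θ t : ℝ} (hθ : θ ≠ 0) :
    HasSum (fun m : ℕ => t ^ (2*m+3) / (2*m+3)! * (-θ^2) ^ m)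
      ((θ*t - Real.sin (θ*t)) / θ^3) := by
  have H := Real.hasSum_sin (θ*t)
  have H1 := ((hasSum_nat_add_iff' (f := fun n : ℕ => (-1:ℝ)^n * (θ*t)^(2*n+1) / (2*n+1)!) 1).mpr
      H).neg.div_const (θ^3)
  have e : (fun m : ℕ => t ^ (2*m+3) / (2*m+3)! * (-θ^2) ^ m)
      = fun n : ℕ => -((-1:ℝ)^(n+1) * (θ*t)^(2*(n+1)+1) / (2*(n+1)+1)!) / θ^3 := by
    funext m
    have h2 : 2*(m+1)+1 = 2*m+3 := by ring
    rw [h2, mul_pow, neg_pow (θ^2) m, pow_succ (-1:ℝ) m]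
    have hfac : ((2*m+3)! : ℝ) ≠ 0 := by positivity
    field_simp
    ring
  have e2 : -(Real.sin (θ*t) - ∑ i ∈ Finset.range 1, (-1:ℝ)^i * (θ*t)^(2*i+1) / (2*i+1)!) / θ^3
      = (θ*t - Real.sin (θ*t)) / θ^3 := by
    simp
  rw [e]
  rw [e2] at H1
  exact H1

lemma scal3 {θ t : ℝ} (hθ : θ ≠ 0) :
    HasSum (fun m : ℕ => t ^ (2*m+4) / (2*m+4)! * (-θ^2) ^ m)
      ((θ^2*t^2/2 - 1 + Real.cos (θ*t)) / θ^4) := by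
  have H := Real.hasSum_cos (θ*t)
  have H1 := ((hasSum_nat_add_iff' (f := fun n : ℕ => (-1:ℝ)^n * (θ*t)^(2*n) / (2*n)!) 2).mpr
      H).div_const (θ^4)
  have e : (fun m : ℕ => t ^ (2*m+4) / (2*m+4)! * (-θ^2) ^ m)
      = fun n : ℕ => ((-1:ℝ)^(n+2) * (θ*t)^(2*(n+2)) / (2*(n+2))!) / θ^4 := by
    funext m
    have h2 : 2*(m+2) = 2*m+4 := by ring
    rw [h2, mul_pow, neg_pow (θ^2) m, pow_add (-1:ℝ) m 2]
    have hfac : ((2*m+4)! : ℝ) ≠ 0 := by positivity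
    field_simp
    ring
  have e2 : (Real.cos (θ*t) - ∑ i ∈ Finset.range 2, (-1:ℝ)^i * (θ*t)^(2*i) / (2*i)!) / θ^4
      = (θ^2*t^2/2 - 1 + Real.cos (θ*t)) / θ^4 := by
    rw [Finset.sum_range_succ, Finset.sum_range_one]
    norm_num [Nat.factorial]
    ring_nf
  rw [e]
  rw [e2] at H1
  exact H1

end Scalars

section PowOmega

variable {θ : ℝ} {Ω : Matrix (Fin 3) (Fin 3) ℝ}

lemma hat_cube (ω : EuclideanSpace ℝ (Fin 3)) (θ : ℝ) (hθ : θ = ‖ω‖) :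
    (hat ω) ^ 3 = (-θ^2) • hat ω := by
  have h : θ^2 = ω 0 ^ 2 + ω 1 ^ 2 + ω 2 ^ 2 := by
    rw [hθ, EuclideanSpace.norm_eq]
    rw [Real.sq_sqrt (by positivity)]
    simp [Fin.sum_univ_three, sq_abs]
  rw [h]
  ext i j
  fin_cases i <;> fin_cases j <;>
    simp [hat, pow_succ, Matrix.mul_apply, Fin.sum_univ_three] <;> ring

lemma pow_odd (h3 : Ω ^ 3 = (-θ^2) • Ω) (m : ℕ) :
    Ω ^ (2*m+1) = ((-θ^2) ^ m) • Ω := by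
  induction m with
  | zero => simp
  | succ k ih =>
      have : 2*(k+1)+1 = (2*k+1) + 2 := by ring
      rw [this, pow_add, ih, smul_mul_assoc, ← pow_succ' Ω 2, h3, smul_smul, ← pow_succ]

lemma pow_even (h3 : Ω ^ 3 = (-θ^2) • Ω) (m : ℕ) :
    Ω ^ (2*m+2) = ((-θ^2) ^ m) • Ω ^ 2 := by
  have : 2*m+2 = (2*m+1) + 1 := by ring
  rw [this, pow_succ, pow_odd h3, smul_mul_assoc, ← pow_two]

lemma hasSum_cpow (h3 : Ω ^ 3 = (-θ^2) • Ω) (X : Matrix (Fin 3) (Fin 2) ℝ)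
    (c : ℕ → ℝ) {s₁ s₂ : ℝ}
    (h₁ : HasSum (fun m : ℕ => c (2*m+1) * (-θ^2) ^ m) s₁)
    (h₂ : HasSum (fun m : ℕ => c (2*m+2) * (-θ^2) ^ m) s₂) :
    HasSum (fun k : ℕ => c k • (Ω ^ k * X))
      ((c 0 • X + s₂ • (Ω ^ 2 * X)) + s₁ • (Ω * X)) := by
  have hodd : HasSum (fun m : ℕ => c (2*m+1) • (Ω ^ (2*m+1) * X)) (s₁ • (Ω * X)) := by
    have e : (fun m : ℕ => c (2*m+1) • (Ω ^ (2*m+1) * X))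
        = fun m : ℕ => (c (2*m+1) * (-θ^2) ^ m) • (Ω * X) := by
      funext m
      rw [pow_odd h3, Matrix.smul_mul, smul_smul]
    rw [e]
    exact h₁.smul_const (Ω * X)
  have heven : HasSum (fun m : ℕ => c (2*m) • (Ω ^ (2*m) * X))
      (c 0 • X + s₂ • (Ω ^ 2 * X)) := by
    apply (hasSum_nat_add_iff' (f := fun m : ℕ => c (2*m) • (Ω ^ (2*m) * X)) 1).mp
    have e : (fun m : ℕ => c (2*(m+1)) • (Ω ^ (2*(m+1)) * X))
        = fun m : ℕ => (c (2*m+2) * (-θ^2) ^ m) • (Ω ^ 2 * X) := by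
      funext m
      have h2 : 2*(m+1) = 2*m+2 := by ring
      rw [h2, pow_even h3, Matrix.smul_mul, smul_smul]
    rw [e]
    have e2 : (c 0 • X + s₂ • (Ω ^ 2 * X))
        - ∑ i ∈ Finset.range 1, c (2*i) • (Ω ^ (2*i) * X) = s₂ • (Ω ^ 2 * X) := by
      simp
    rw [e2]
    exact h₂.smul_const (Ω ^ 2 * X)
  exact heven.even_add_odd hodd

end PowOmega

section BlockPow

noncomputable def Cf (t : ℝ) (Ω : Matrix (Fin 3) (Fin 3) ℝ) (A : Matrix (Fin 3) (Fin 2) ℝ)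
    (B : Matrix (Fin 2) (Fin 2) ℝ) : ℕ → Matrix (Fin 3) (Fin 2) ℝ
  | 0 => 0
  | 1 => t • A
  | (n+2) => t^(n+2) • (Ω^(n+1) * A) + t^(n+2) • (Ω^n * (A * B))

lemma pow_blocks (t : ℝ) (Ω : Matrix (Fin 3) (Fin 3) ℝ) (A : Matrix (Fin 3) (Fin 2) ℝ)
    (B : Matrix (Fin 2) (Fin 2) ℝ) (hB2 : B * B = 0) (n : ℕ) :
    (t • Matrix.fromBlocks Ω A 0 B) ^ n
      = Matrix.fromBlocks ((t • Ω) ^ n) (Cf t Ω A B n) 0 ((t • B) ^ n) := by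
  induction n with
  | zero => simp [Cf, Matrix.fromBlocks_one]
  | succ n ih =>
      rw [pow_succ, ih]
      have hs : t • Matrix.fromBlocks Ω A 0 B
          = Matrix.fromBlocks (t • Ω) (t • A) 0 (t • B) := by
        rw [Matrix.fromBlocks_smul, smul_zero]
      rw [hs, Matrix.fromBlocks_multiply]
      simp only [Matrix.mul_zero, Matrix.zero_mul, add_zero, zero_add, ← pow_succ]
      have hTR : (t • Ω) ^ n * (t • A) + Cf t Ω A B n * (t • B) = Cf t Ω A B (n+1) := by
        match n with
        | 0 => simp [Cf]
        | 1 =>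
            simp only [Cf, pow_one, Matrix.smul_mul, Matrix.mul_smul, smul_smul]
            simp [pow_succ, smul_smul]
        | (k+2) =>
            simp only [Cf, smul_pow, Matrix.smul_mul, Matrix.mul_smul, smul_smul,
              Matrix.add_mul]
            rw [Matrix.mul_assoc (Ω ^ (k+1)) A B, Matrix.mul_assoc (Ω ^ k) (A * B) B,
              Matrix.mul_assoc A B B, hB2, Matrix.mul_zero, Matrix.mul_zero, smul_zero,
              add_zero]
            module
      rw [hTR]

end BlockPow

section ExpBridge

lemma exp_hasSum {n : Type*} [Fintype n] [DecidableEq n] (X : Matrix n n ℝ) :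
    HasSum (fun k : ℕ => ((k ! : ℝ))⁻¹ • X ^ k) (NormedSpace.exp X) := by
  letI : SeminormedRing (Matrix n n ℝ) := Matrix.linftyOpSemiNormedRing
  letI : NormedRing (Matrix n n ℝ) := Matrix.linftyOpNormedRing
  letI : NormedAlgebra ℝ (Matrix n n ℝ) := Matrix.linftyOpNormedAlgebra
  exact NormedSpace.exp_series_hasSum_exp' X

end ExpBridge

/-- The closed form of `exp(tM) · X₀ · exp(tN)` for the SINS mixed-invariant system. -/
theorem stmt19 (ω a : EuclideanSpace ℝ (Fin 3)) (θ : ℝ) (hθ : θ = ‖ω‖) (hθ0 : θ ≠ 0)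
    (g : ℝ) (a_g : Fin 3 → ℝ) (ha_g : a_g = ![0, 0, g])
    (Ω : Matrix (Fin 3) (Fin 3) ℝ) (hΩ : Ω = hat ω)
    (A_M : Matrix (Fin 3) (Fin 2) ℝ) (hAM : A_M = cols a_g 0)
    (A_N : Matrix (Fin 3) (Fin 2) ℝ) (hAN : A_N = cols (fun i => a i) 0)
    (B : Matrix (Fin 2) (Fin 2) ℝ) (hB : B = !![0, 1; 0, 0])
    (M : Matrix (Fin 3 ⊕ Fin 2) (Fin 3 ⊕ Fin 2) ℝ) (hM : M = Matrix.fromBlocks 0 A_M 0 (-B))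
    (N : Matrix (Fin 3 ⊕ Fin 2) (Fin 3 ⊕ Fin 2) ℝ) (hN : N = Matrix.fromBlocks Ω A_N 0 B)
    (R₀ : Matrix (Fin 3) (Fin 3) ℝ) (v₀ p₀ : Fin 3 → ℝ)
    (P₀ : Matrix (Fin 3) (Fin 2) ℝ) (hP₀ : P₀ = cols v₀ p₀)
    (X₀ : Matrix (Fin 3 ⊕ Fin 2) (Fin 3 ⊕ Fin 2) ℝ) (hX₀ : X₀ = Matrix.fromBlocks R₀ P₀ 0 1)
    (t : ℝ)
    (P_M : Matrix (Fin 3) (Fin 2) ℝ) (hPM : P_M = cols (t • a_g) (-(t ^ 2 / 2) • a_g))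
    (P_N : Matrix (Fin 3) (Fin 2) ℝ)
    (hPN : P_N = cols
      ((t • (1 : Matrix (Fin 3) (Fin 3) ℝ)
        + ((1 - Real.cos (θ * t)) / θ ^ 2) • Ω
        + ((θ * t - Real.sin (θ * t)) / θ ^ 3) • Ω ^ 2).mulVec a)
      (((t ^ 2 / 2) • (1 : Matrix (Fin 3) (Fin 3) ℝ)
        + ((θ * t - Real.sin (θ * t)) / θ ^ 3) • Ω
        + ((θ ^ 2 * t ^ 2 / 2 - 1 + Real.cos (θ * t)) / θ ^ 4) • Ω ^ 2).mulVec a)) :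
    NormedSpace.exp (t • M) * X₀ * NormedSpace.exp (t • N) =
      Matrix.fromBlocks (R₀ * NormedSpace.exp (t • Ω))
        (R₀ * P_N + (P₀ + P_M) * (1 + t • B)) 0 1 := by
  subst hM hN hX₀ hPM hPN hP₀ hB hAM hAN
  have h3 : Ω ^ 3 = (-θ^2) • Ω := by rw [hΩ]; exact hat_cube ω θ hθ
  set B : Matrix (Fin 2) (Fin 2) ℝ := !![0, 1; 0, 0] with hB
  have hB2 : B * B = 0 := by
    ext i j; fin_cases i <;> fin_cases j <;> simp [hB, Matrix.mul_apply, Fin.sum_univ_succ]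
  set c1 : ℝ := (1 - Real.cos (θ * t)) / θ ^ 2 with hc1
  set c2 : ℝ := (θ * t - Real.sin (θ * t)) / θ ^ 3 with hc2
  set c3 : ℝ := (θ ^ 2 * t ^ 2 / 2 - 1 + Real.cos (θ * t)) / θ ^ 4 with hc3
  set AN : Matrix (Fin 3) (Fin 2) ℝ := cols (fun i => a i) 0 with hANdef
  -- HasSum for the two pieces of the top-right block of exp (t • N)
  have Hu : HasSum (fun k : ℕ => (t ^ (k+1) / (k+1)!) • (Ω ^ k * AN))
      (((t ^ (0+1) / ((0+1 : ℕ))!) • AN + c2 • (Ω ^ 2 * AN)) + c1 • (Ω * AN)) :=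
    hasSum_cpow h3 AN (fun k => t ^ (k+1) / (k+1)!) (scal1 hθ0) (scal2 hθ0)
  have Hv : HasSum (fun k : ℕ => (t ^ (k+2) / (k+2)!) • (Ω ^ k * (AN * B)))
      (((t ^ (0+2) / ((0+2 : ℕ))!) • (AN * B) + c3 • (Ω ^ 2 * (AN * B)))
        + c2 • (Ω * (AN * B))) :=
    hasSum_cpow h3 (AN * B) (fun k => t ^ (k+2) / (k+2)!) (scal2 hθ0) (scal3 hθ0)
  set Tu := ((t ^ (0+1) / ((0+1 : ℕ))!) • AN + c2 • (Ω ^ 2 * AN)) + c1 • (Ω * AN) with hTu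
  set Tv := ((t ^ (0+2) / ((0+2 : ℕ))!) • (AN * B) + c3 • (Ω ^ 2 * (AN * B)))
        + c2 • (Ω * (AN * B)) with hTv
  -- shifted version of Hv
  let Gv : ℕ → Matrix (Fin 3) (Fin 2) ℝ :=
    fun n => Nat.casesOn n 0 (fun m => (t ^ (m+2) / (m+2)!) • (Ω ^ m * (AN * B)))
  have HGv : HasSum Gv Tv := by
    apply (hasSum_nat_add_iff' (f := Gv) 1).mp
    have e : (fun n : ℕ => Gv (n+1))
        = fun m : ℕ => (t ^ (m+2) / (m+2)!) • (Ω ^ m * (AN * B)) := rfl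
    rw [e]
    have e2 : Tv - ∑ i ∈ Finset.range 1, Gv i = Tv := by simp [Gv]
    rw [e2]
    exact Hv
  -- the full top-right sum
  have key : ∀ n : ℕ, (((n+1)! : ℝ))⁻¹ • Cf t Ω AN B (n+1)
      = (t ^ (n+1) / (n+1)!) • (Ω ^ n * AN) + Gv n := by
    intro n
    match n with
    | 0 => simp [Cf, Gv, div_eq_mul_inv, mul_comm]
    | (m+1) =>
        show (((m+2)! : ℝ))⁻¹ • (t^(m+2) • (Ω^(m+1) * AN) + t^(m+2) • (Ω^m * (AN * B))) = _
        rw [smul_add, smul_smul, smul_smul]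
        congr 1
        · congr 1; rw [div_eq_mul_inv, mul_comm]
        · show _ = (t ^ (m+2) / (m+2)!) • (Ω ^ m * (AN * B))
          congr 1; rw [div_eq_mul_inv, mul_comm]
  have HF : HasSum (fun n : ℕ => ((n ! : ℝ))⁻¹ • Cf t Ω AN B n) (Tu + Tv) := by
    apply (hasSum_nat_add_iff' (f := fun n : ℕ => ((n ! : ℝ))⁻¹ • Cf t Ω AN B n) 1).mp
    have e : (fun n : ℕ => (((n+1)! : ℝ))⁻¹ • Cf t Ω AN B (n+1))
        = fun n : ℕ => (t ^ (n+1) / (n+1)!) • (Ω ^ n * AN) + Gv n := funext key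
    rw [e]
    have e2 : (Tu + Tv) - ∑ i ∈ Finset.range 1, ((i ! : ℝ))⁻¹ • Cf t Ω AN B i
        = Tu + Tv := by simp [Cf]
    rw [e2]
    exact Hu.add HGv
  -- bottom-right block
  have hBR : HasSum (fun n : ℕ => ((n ! : ℝ))⁻¹ • (t • B) ^ n) (1 + t • B) := by
    have hzero : ∀ n ∉ Finset.range 2, ((n ! : ℝ))⁻¹ • (t • B) ^ n = 0 := by
      intro n hn
      have h2n : 2 ≤ n := by simp at hn; omega
      obtain ⟨m, rfl⟩ := Nat.exists_eq_add_of_le h2n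
      rw [pow_add, pow_two, Matrix.smul_mul, Matrix.mul_smul, hB2]
      simp
    have H : HasSum (fun n : ℕ => ((n ! : ℝ))⁻¹ • (t • B) ^ n) _ := hasSum_sum_of_ne_finset_zero hzero
    have e : ∑ n ∈ Finset.range 2, ((n ! : ℝ))⁻¹ • (t • B) ^ n = 1 + t • B := by
      rw [Finset.sum_range_succ, Finset.sum_range_one]
      simp
    rwa [e] at H
  -- exp of t • N
  have hblocksN : HasSum (fun n : ℕ => ((n ! : ℝ))⁻¹ • (t • Matrix.fromBlocks Ω AN 0 B) ^ n)
      (Matrix.fromBlocks (NormedSpace.exp (t • Ω)) (Tu + Tv) 0 (1 + t • B)) := by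
    have e : (fun n : ℕ => ((n ! : ℝ))⁻¹ • (t • Matrix.fromBlocks Ω AN 0 B) ^ n)
        = fun n : ℕ => Matrix.fromBlocks (((n ! : ℝ))⁻¹ • (t • Ω) ^ n)
            (((n ! : ℝ))⁻¹ • Cf t Ω AN B n) 0 (((n ! : ℝ))⁻¹ • (t • B) ^ n) := by
      funext n
      rw [pow_blocks t Ω AN B hB2 n, Matrix.fromBlocks_smul, smul_zero]
    rw [e]
    exact hasSum_fromBlocks (exp_hasSum (t • Ω)) HF hBR
  have expN : NormedSpace.exp (t • Matrix.fromBlocks Ω AN 0 B)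
      = Matrix.fromBlocks (NormedSpace.exp (t • Ω)) (Tu + Tv) 0 (1 + t • B) :=
    (exp_hasSum _).unique hblocksN
  -- exp of t • M
  set AM : Matrix (Fin 3) (Fin 2) ℝ := cols a_g 0 with hAMdef
  have hB2' : (-B) * (-B) = 0 := by rw [neg_mul_neg, hB2]
  have hzM : ∀ n ∉ Finset.range 3,
      ((n ! : ℝ))⁻¹ • (t • Matrix.fromBlocks (0 : Matrix (Fin 3) (Fin 3) ℝ) AM 0 (-B)) ^ n = 0 := by
    intro n hn
    have h3n : 3 ≤ n := by simpa using hn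
    obtain ⟨m, rfl⟩ := Nat.exists_eq_add_of_le h3n
    rw [pow_blocks t (0 : Matrix (Fin 3) (Fin 3) ℝ) AM (-B) hB2' (3+m)]
    have e1 : (t • (0 : Matrix (Fin 3) (Fin 3) ℝ)) ^ (3+m) = 0 := by
      rw [smul_zero]; exact zero_pow (by omega)
    have e2 : Cf t (0 : Matrix (Fin 3) (Fin 3) ℝ) AM (-B) (3+m) = 0 := by
      have hidx : 3 + m = (m+1)+2 := by omega
      rw [hidx]
      show t^(m+1+2) • ((0 : Matrix (Fin 3) (Fin 3) ℝ)^(m+1+1) * AM)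
          + t^(m+1+2) • ((0 : Matrix (Fin 3) (Fin 3) ℝ)^(m+1) * (AM * (-B))) = 0
      rw [zero_pow (by omega), zero_pow (by omega)]
      simp
    have e3 : (t • (-B)) ^ (3+m) = 0 := by
      have : (3+m) = 2 + (1+m) := by omega
      rw [this, pow_add, pow_two, Matrix.smul_mul, Matrix.mul_smul, hB2']
      simp
    rw [e1, e2, e3]
    simp
  have hMsum : HasSum (fun n : ℕ =>
      ((n ! : ℝ))⁻¹ • (t • Matrix.fromBlocks (0 : Matrix (Fin 3) (Fin 3) ℝ) AM 0 (-B)) ^ n) _ :=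
    hasSum_sum_of_ne_finset_zero hzM
  set PMm : Matrix (Fin 3) (Fin 2) ℝ := t • AM - (t^2/2) • (AM * B) with hPMm
  have c2' : Cf t (0 : Matrix (Fin 3) (Fin 3) ℝ) AM (-B) 2 = -(t^2 • (AM * B)) := by
    show t^(0+2) • ((0 : Matrix (Fin 3) (Fin 3) ℝ)^(0+1) * AM)
        + t^(0+2) • ((0 : Matrix (Fin 3) (Fin 3) ℝ)^0 * (AM * (-B))) = _
    rw [zero_pow (by omega), Matrix.zero_mul, smul_zero, zero_add, pow_zero,
      Matrix.one_mul, Matrix.mul_neg, smul_neg]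
  have f0 : ((0! : ℝ))⁻¹ • (t • Matrix.fromBlocks (0 : Matrix (Fin 3) (Fin 3) ℝ) AM 0 (-B)) ^ 0
      = Matrix.fromBlocks (1 : Matrix (Fin 3) (Fin 3) ℝ) 0 0 1 := by
    simp [Matrix.fromBlocks_one]
  have f1 : ((1! : ℝ))⁻¹ • (t • Matrix.fromBlocks (0 : Matrix (Fin 3) (Fin 3) ℝ) AM 0 (-B)) ^ 1
      = Matrix.fromBlocks (0 : Matrix (Fin 3) (Fin 3) ℝ) (t • AM) 0 (-(t • B)) := by
    rw [pow_blocks t (0 : Matrix (Fin 3) (Fin 3) ℝ) AM (-B) hB2' 1]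
    have : Cf t (0 : Matrix (Fin 3) (Fin 3) ℝ) AM (-B) 1 = t • AM := rfl
    rw [this]
    simp
  have f2 : ((2! : ℝ))⁻¹ • (t • Matrix.fromBlocks (0 : Matrix (Fin 3) (Fin 3) ℝ) AM 0 (-B)) ^ 2
      = Matrix.fromBlocks (0 : Matrix (Fin 3) (Fin 3) ℝ) (-((t^2/2) • (AM * B))) 0 0 := by
    rw [pow_blocks t (0 : Matrix (Fin 3) (Fin 3) ℝ) AM (-B) hB2' 2, c2']
    have p2 : ((t • (-B)) : Matrix (Fin 2) (Fin 2) ℝ) ^ 2 = 0 := by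
      rw [pow_two, Matrix.smul_mul, Matrix.mul_smul, hB2']
      simp
    have p0 : ((t • (0 : Matrix (Fin 3) (Fin 3) ℝ))) ^ 2 = 0 := by
      rw [smul_zero]; exact zero_pow (by omega)
    rw [p2, p0, Matrix.fromBlocks_smul]
    have hco : ((2! : ℝ))⁻¹ • -(t^2 • (AM * B)) = -((t^2/2) • (AM * B)) := by
      rw [smul_neg, smul_smul]
      norm_num [Nat.factorial]
      module
    rw [hco]
    simp
  have eS3 : ∑ n ∈ Finset.range 3,
      ((n ! : ℝ))⁻¹ • (t • Matrix.fromBlocks (0 : Matrix (Fin 3) (Fin 3) ℝ) AM 0 (-B)) ^ n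
      = Matrix.fromBlocks 1 PMm 0 (1 - t • B) := by
    rw [Finset.sum_range_succ, Finset.sum_range_succ, Finset.sum_range_one, f0, f1, f2,
      Matrix.fromBlocks_add, Matrix.fromBlocks_add]
    simp [hPMm, sub_eq_add_neg]
  have expM : NormedSpace.exp (t • Matrix.fromBlocks (0 : Matrix (Fin 3) (Fin 3) ℝ) AM 0 (-B))
      = Matrix.fromBlocks 1 PMm 0 (1 - t • B) :=
    (exp_hasSum _).unique (eS3 ▸ hMsum)
  -- final assembly
  rw [expM, expN, Matrix.fromBlocks_multiply, Matrix.fromBlocks_multiply]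
  have hBB : (1 - t • B) * (1 + t • B) = (1 : Matrix (Fin 2) (Fin 2) ℝ) := by
    have : (t • B) * (t • B) = 0 := by
      rw [Matrix.smul_mul, Matrix.mul_smul, hB2]
      simp
    rw [Matrix.sub_mul, Matrix.mul_add, Matrix.mul_add, Matrix.one_mul, Matrix.one_mul,
      Matrix.mul_one, this]
    abel
  have hPMeq : PMm = cols (t • a_g) (-(t ^ 2 / 2) • a_g) := by
    rw [hPMm, hAMdef, cols_mul_B, cols_smul, cols_smul, cols_sub]
    simp [neg_smul]
  have hTReq : Tu + Tv
      = cols ((t • (1 : Matrix (Fin 3) (Fin 3) ℝ) + c1 • Ω + c2 • Ω ^ 2).mulVec a)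
          (((t ^ 2 / 2) • (1 : Matrix (Fin 3) (Fin 3) ℝ) + c2 • Ω + c3 • Ω ^ 2).mulVec a) := by
    have hstep : Tu + Tv
        = (t • (1 : Matrix (Fin 3) (Fin 3) ℝ) + c1 • Ω + c2 • Ω ^ 2) * AN
          + ((t ^ 2 / 2) • (1 : Matrix (Fin 3) (Fin 3) ℝ) + c2 • Ω + c3 • Ω ^ 2) * (AN * B) := by
      rw [hTu, hTv]
      simp only [Matrix.add_mul, Matrix.smul_mul, Matrix.one_mul]
      norm_num [Nat.factorial]
      module
    rw [hstep, hANdef, cols_mul_B, mul_cols, mul_cols]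
    rw [Matrix.mulVec_zero, Matrix.mulVec_zero, cols_add]
    simp
  simp only [Matrix.mul_zero, Matrix.zero_mul, Matrix.mul_one, Matrix.one_mul,
    add_zero, zero_add]
  rw [hBB, hPMeq, hTReq]
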